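/- arXiv:1808.04782 — 5 statements merged into one kernel-verified Lean document; each statement's English description precedes it below -/
import Mathlib

section
/- (Theorem 1(a), standard non-weight-preserving tempering.) Let d ≥ 1, let μ ∈ ℝ^d, let Σ be a positive definite real d×d matrix, let w > 0 and let β > 0. Then ∫_{ℝ^d} (w · φ(x; μ, Σ))^β dx = w^β · ((2π)^d · det Σ)^{(1-β)/2} · β^{-d/2}. In particular, for a Gaussian mixture π(x) ∝ Σ_j w_j φ(x; μ_j, Σ_j), the mass that the power-tempered component [w_j φ(x; μ_j, Σ_j)]^β assigns to mode j is proportional to w_j^β (det Σ_j)^{(1-β)/2}. -/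
open MeasureTheory Matrix

/-- The multivariate Gaussian density
`φ(x; μ, Σ) = (2π)^{-d/2} (det Σ)^{-1/2} exp(-(1/2)(x-μ)ᵀ Σ⁻¹ (x-μ))`. -/
noncomputable def gaussDensity (d : ℕ) (μ : Fin d → ℝ) (S : Matrix (Fin d) (Fin d) ℝ)
    (x : Fin d → ℝ) : ℝ :=
  (2 * Real.pi) ^ (-(d : ℝ) / 2) * S.det ^ (-(1 : ℝ) / 2) *
    Real.exp (-(1 / 2) * ((x - μ) ⬝ᵥ (S⁻¹ *ᵥ (x - μ))))

lemma integral_exp_neg_mul_sum_sq (d : ℕ) {b : ℝ} (hb : 0 < b) :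
    ∫ v : Fin d → ℝ, Real.exp (-b * ∑ i, v i ^ 2) = (Real.pi / b) ^ ((d : ℝ) / 2) := by
  have hvol := (EuclideanSpace.volume_preserving_symm_measurableEquiv_toLp (Fin d)).symm
  calc ∫ v : Fin d → ℝ, Real.exp (-b * ∑ i, v i ^ 2)
      = ∫ v : Fin d → ℝ, (fun w : EuclideanSpace ℝ (Fin d) => Real.exp (-b * ‖w‖ ^ 2))
          ((MeasurableEquiv.toLp 2 (Fin d → ℝ)) v) := by
        congr 1
        ext v
        congr 2
        rw [EuclideanSpace.norm_eq,
          Real.sq_sqrt (Finset.sum_nonneg fun i _ => by positivity)]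
        simp [Real.norm_eq_abs, sq_abs]
    _ = ∫ w : EuclideanSpace ℝ (Fin d), Real.exp (-b * ‖w‖ ^ 2) :=
        hvol.integral_comp (MeasurableEquiv.measurableEmbedding _)
          (fun w : EuclideanSpace ℝ (Fin d) => Real.exp (-b * ‖w‖ ^ 2))
    _ = (Real.pi / b) ^ ((d : ℝ) / 2) := by
        rw [GaussianFourier.integral_rexp_neg_mul_sq_norm hb]
        congr 1
        rw [finrank_euclideanSpace_fin]

open scoped MatrixOrder in
lemma integral_exp_neg_quadForm (d : ℕ) (S : Matrix (Fin d) (Fin d) ℝ) (hS : S.PosDef)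
    {b : ℝ} (hb : 0 < b) :
    ∫ y : Fin d → ℝ, Real.exp (-b * (y ⬝ᵥ S⁻¹ *ᵥ y)) =
      Real.sqrt S.det * (Real.pi / b) ^ ((d : ℝ) / 2) := by
  have hT : (S⁻¹).PosDef := hS.inv
  set B := CFC.sqrt (S⁻¹) with hBdef
  have hBB : B * B = S⁻¹ := CFC.sqrt_mul_sqrt_self _ hT.posSemidef.nonneg
  have hBsym : Bᵀ = B := by
    have := (CFC.sqrt_nonneg (S⁻¹)).posSemidef.isHermitian
    exact Matrix.IsSymm.eq (by simpa using this)
  have hquad : ∀ y : Fin d → ℝ, y ⬝ᵥ S⁻¹ *ᵥ y = ∑ i, (B *ᵥ y) i ^ 2 := by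
    intro y
    rw [← hBB, ← Matrix.mulVec_mulVec, Matrix.dotProduct_mulVec, ← Matrix.vecMul_transpose,
      hBsym]
    simp [dotProduct, sq]
  have hdet2 : B.det * B.det = S.det⁻¹ := by
    rw [← Matrix.det_mul, hBB, Matrix.det_nonsing_inv, Ring.inverse_eq_inv]
  have hSdet : 0 < S.det := hS.det_pos
  have habs : |B.det| = Real.sqrt S.det⁻¹ := by
    rw [← Real.sqrt_sq_eq_abs, sq, hdet2]
  have hdetB : B.det ≠ 0 := by
    intro h
    rw [h, mul_zero] at hdet2
    exact (inv_pos.mpr hSdet).ne' hdet2.symm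
  -- change of variables
  have hmap := Real.map_matrix_volume_pi_eq_smul_volume_pi hdetB
  have hcont : Continuous (Matrix.toLin' B) := LinearMap.continuous_of_finiteDimensional _
  have hmeas : AEMeasurable (Matrix.toLin' B) volume := hcont.measurable.aemeasurable
  have hf : Continuous (fun z : Fin d → ℝ => Real.exp (-b * ∑ i, z i ^ 2)) := by
    continuity
  have key : ∫ y : Fin d → ℝ, Real.exp (-b * ∑ i, (B *ᵥ y) i ^ 2) =
      |B.det|⁻¹ * ∫ z : Fin d → ℝ, Real.exp (-b * ∑ i, z i ^ 2) := by
    have := MeasureTheory.integral_map hmeas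
      (f := fun z : Fin d → ℝ => Real.exp (-b * ∑ i, z i ^ 2))
      (hf.aestronglyMeasurable)
    rw [hmap] at this
    simp only [Matrix.toLin'_apply] at this
    rw [← this, integral_smul_measure,
      ENNReal.toReal_ofReal (by positivity), smul_eq_mul, abs_inv]
  simp only [hquad]
  rw [key, integral_exp_neg_mul_sum_sq d hb, habs]
  rw [Real.sqrt_inv, inv_inv]

lemma exp_rpow' (t β : ℝ) : Real.exp t ^ β = Real.exp (β * t) := by
  rw [Real.rpow_def_of_pos (Real.exp_pos t), Real.log_exp, mul_comm]

/-- Theorem 1(a), standard non-weight-preserving tempering: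
`∫ (w φ(x; μ, Σ))^β dx = w^β ((2π)^d det Σ)^{(1-β)/2} β^{-d/2}`, i.e. the mass that the
power-tempered component assigns to mode `j` is proportional to `w^β (det Σ)^{(1-β)/2}`. -/
theorem integral_rpow_weighted_gaussDensity (d : ℕ) (hd : 1 ≤ d) (μ : Fin d → ℝ)
    (S : Matrix (Fin d) (Fin d) ℝ) (hS : S.PosDef) (w β : ℝ) (hw : 0 < w) (hβ : 0 < β) :
    ∫ x : Fin d → ℝ, (w * gaussDensity d μ S x) ^ β =
      w ^ β * ((2 * Real.pi) ^ (d : ℝ) * S.det) ^ ((1 - β) / 2) * β ^ (-(d : ℝ) / 2) := by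
  have hp : (0:ℝ) < 2 * Real.pi := by positivity
  have hs : (0:ℝ) < S.det := hS.det_pos
  have hc : (0:ℝ) < (2 * Real.pi) ^ (-(d:ℝ)/2) * S.det ^ (-(1:ℝ)/2) := by positivity
  have step1 : ∀ x : Fin d → ℝ, (w * gaussDensity d μ S x) ^ β =
      (w ^ β * ((2 * Real.pi) ^ (-(d:ℝ)/2) * S.det ^ (-(1:ℝ)/2)) ^ β) *
        Real.exp (-(β/2) * ((x - μ) ⬝ᵥ S⁻¹ *ᵥ (x - μ))) := by
    intro x
    unfold gaussDensity
    rw [show w * ((2 * Real.pi) ^ (-(d:ℝ)/2) * S.det ^ (-(1:ℝ)/2) *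
        Real.exp (-(1/2) * ((x - μ) ⬝ᵥ S⁻¹ *ᵥ (x - μ)))) =
        (w * ((2 * Real.pi) ^ (-(d:ℝ)/2) * S.det ^ (-(1:ℝ)/2))) *
        Real.exp (-(1/2) * ((x - μ) ⬝ᵥ S⁻¹ *ᵥ (x - μ))) from by ring]
    rw [Real.mul_rpow (by positivity) (Real.exp_pos _).le, Real.mul_rpow hw.le hc.le,
      exp_rpow']
    ring_nf
  simp only [step1]
  rw [MeasureTheory.integral_const_mul]
  have sub : ∫ x : Fin d → ℝ, Real.exp (-(β/2) * ((x - μ) ⬝ᵥ S⁻¹ *ᵥ (x - μ))) =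
      ∫ y : Fin d → ℝ, Real.exp (-(β/2) * (y ⬝ᵥ S⁻¹ *ᵥ y)) :=
    integral_sub_right_eq_self (fun y : Fin d → ℝ =>
      Real.exp (-(β/2) * (y ⬝ᵥ S⁻¹ *ᵥ y))) μ
  rw [sub, integral_exp_neg_quadForm d S hS (by positivity)]
  have e1 : Real.pi / (β / 2) = (2 * Real.pi) * β⁻¹ := by
    field_simp
  have A : ((2*Real.pi) ^ (-(d:ℝ)/2) * S.det ^ (-(1:ℝ)/2)) ^ β
      = (2*Real.pi) ^ (-(d:ℝ)/2*β) * S.det ^ (-(1:ℝ)/2*β) := by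
    rw [Real.mul_rpow (by positivity) (by positivity), ← Real.rpow_mul hp.le,
      ← Real.rpow_mul hs.le]
  have B : ((2*Real.pi) ^ (d:ℝ) * S.det) ^ ((1-β)/2)
      = (2*Real.pi) ^ ((d:ℝ)*((1-β)/2)) * S.det ^ ((1-β)/2) := by
    rw [Real.mul_rpow (by positivity) hs.le, ← Real.rpow_mul hp.le]
  rw [A, B, e1, Real.mul_rpow hp.le (by positivity), Real.inv_rpow hβ.le,
    ← Real.rpow_neg hβ.le, Real.sqrt_eq_rpow]
  rw [show w ^ β * ((2*Real.pi) ^ (-(d:ℝ)/2*β) * S.det ^ (-(1:ℝ)/2*β)) *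
      (S.det ^ ((1:ℝ)/2) * ((2*Real.pi) ^ ((d:ℝ)/2) * β ^ (-((d:ℝ)/2)))) =
      w ^ β * (((2*Real.pi) ^ (-(d:ℝ)/2*β) * (2*Real.pi) ^ ((d:ℝ)/2)) *
      (S.det ^ (-(1:ℝ)/2*β) * S.det ^ ((1:ℝ)/2))) * β ^ (-((d:ℝ)/2)) from by ring]
  rw [← Real.rpow_add hp, ← Real.rpow_add hs,
    show (-(d:ℝ)/2*β + (d:ℝ)/2) = (d:ℝ)*((1-β)/2) from by ring,
    show (-(1:ℝ)/2*β + (1:ℝ)/2) = (1-β)/2 from by ring,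
    show (-((d:ℝ)/2)) = -(d:ℝ)/2 from by ring]
end

section
/- (Theorem 1(c), weight-preserving tempering, version #2.) Let d ≥ 1, let μ ∈ ℝ^d, let Σ be a positive definite real d×d matrix, let w > 0 and β > 0, and set h(x) = w · φ(x; μ, Σ). Then h(x)^β · h(μ)^{1-β} = (w / β^{d/2}) · φ(x; μ, Σ/β) for every x ∈ ℝ^d, and hence ∫_{ℝ^d} h(x)^β h(μ)^{1-β} dx = w · β^{-d/2}. In particular, for a Gaussian mixture Σ_j w_j φ(x; μ_j, Σ_j) tempered componentwise via f_j(x, β) = h_j(x)^β h_j(μ_j)^{1-β}, the tempered component weights are proportional to w_j, independently of β and of the covariances Σ_j. -/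
open MeasureTheory Matrix

open scoped MatrixOrder in
lemma gauss_quad_integral {d : ℕ} {M : Matrix (Fin d) (Fin d) ℝ} (hM : M.PosDef) :
    ∫ x : Fin d → ℝ, Real.exp (-(1 / 2) * (x ⬝ᵥ (M⁻¹ *ᵥ x))) =
      (2 * Real.pi) ^ ((d : ℝ) / 2) * M.det ^ ((1 : ℝ) / 2) := by
  set T := CFC.sqrt M with hT
  have hTT : T * T = M := CFC.sqrt_mul_sqrt_self M hM.posSemidef.nonneg
  have hdetM : 0 < M.det := hM.det_pos
  have hdet2 : T.det * T.det = M.det := by rw [← det_mul, hTT]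
  have hdetT : T.det ≠ 0 := by
    intro h0; rw [h0, mul_zero] at hdet2; exact hdetM.ne' hdet2.symm
  have hu : IsUnit T.det := isUnit_iff_ne_zero.mpr hdetT
  have hTsym : Tᵀ = T := by
    have := (CFC.sqrt_nonneg M).posSemidef.1
    rwa [Matrix.IsHermitian, conjTranspose_eq_transpose_of_trivial] at this
  have h1 : T * T⁻¹ = 1 := mul_nonsing_inv T hu
  have h2 : T⁻¹ * T = 1 := nonsing_inv_mul T hu
  have hkey : T * M⁻¹ * T = 1 := by
    rw [← hTT, Matrix.mul_inv_rev, ← Matrix.mul_assoc, h1, Matrix.one_mul, h2]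
  have hquad : ∀ y : Fin d → ℝ, (T *ᵥ y) ⬝ᵥ (M⁻¹ *ᵥ (T *ᵥ y)) = y ⬝ᵥ y := by
    intro y
    have e1 : T *ᵥ y = y ᵥ* Tᵀ := by
      rw [← mulVec_transpose, transpose_transpose]
    calc (T *ᵥ y) ⬝ᵥ (M⁻¹ *ᵥ (T *ᵥ y))
        = (y ᵥ* Tᵀ) ⬝ᵥ (M⁻¹ *ᵥ (T *ᵥ y)) := by rw [← e1]
      _ = y ⬝ᵥ (Tᵀ *ᵥ (M⁻¹ *ᵥ (T *ᵥ y))) := by rw [← dotProduct_mulVec]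
      _ = y ⬝ᵥ ((Tᵀ * M⁻¹ * T) *ᵥ y) := by rw [mulVec_mulVec, mulVec_mulVec, Matrix.mul_assoc]
      _ = y ⬝ᵥ y := by rw [hTsym, hkey, one_mulVec]
  have : Invertible T := T.invertibleOfIsUnitDet hu
  let e : (Fin d → ℝ) ≃ₗ[ℝ] Fin d → ℝ := T.toLinearEquiv' this
  let me' : (Fin d → ℝ) ≃ᵐ (Fin d → ℝ) :=
    e.toContinuousLinearEquiv.toHomeomorph.toMeasurableEquiv
  have hcoe : (⇑me' : (Fin d → ℝ) → Fin d → ℝ) = ⇑(Matrix.toLin' T) := by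
    ext x i
    rfl
  have hfdet : LinearMap.det (Matrix.toLin' T) ≠ 0 := by
    rw [LinearMap.det_toLin']; exact hdetT
  have hmap : Measure.map me' volume = ENNReal.ofReal |T.det⁻¹| • volume := by
    have := Measure.map_linearMap_addHaar_pi_eq_smul_addHaar (f := Matrix.toLin' T) hfdet
      (volume : Measure (Fin d → ℝ))
    rw [LinearMap.det_toLin'] at this
    calc Measure.map me' volume = Measure.map (Matrix.toLin' T) volume := by rw [← hcoe]
      _ = ENNReal.ofReal |T.det⁻¹| • volume := this
  set g : (Fin d → ℝ) → ℝ := fun x => Real.exp (-(1 / 2) * (x ⬝ᵥ (M⁻¹ *ᵥ x))) with hg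
  have key : (∫ x, g x) = |T.det| * ∫ x, g (T *ᵥ x) := by
    have h3 := MeasureTheory.integral_map_equiv (μ := volume) me' g
    rw [hmap, integral_smul_measure, ENNReal.toReal_ofReal (abs_nonneg _)] at h3
    have h4 : (∫ x, g (me' x)) = ∫ x, g (T *ᵥ x) := by
      apply integral_congr_ae; filter_upwards with x
      rw [hcoe]; rw [Matrix.toLin'_apply]
    rw [h4] at h3
    rw [← h3, abs_inv, smul_eq_mul, ← mul_assoc, mul_inv_cancel₀, one_mul]
    exact abs_ne_zero.mpr hdetT
  have hmid : (∫ x, g (T *ᵥ x)) = Real.sqrt (2 * Real.pi) ^ d := by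
    have hpt : ∀ x : Fin d → ℝ, g (T *ᵥ x) = ∏ i, Real.exp (-(1 / 2) * x i ^ 2) := by
      intro x
      rw [hg]; simp only
      rw [hquad x, ← Real.exp_sum]
      congr 1
      simp [dotProduct, Finset.mul_sum, sq]
    calc (∫ x, g (T *ᵥ x)) = ∫ x : Fin d → ℝ, ∏ i, Real.exp (-(1 / 2) * x i ^ 2) := by
          apply integral_congr_ae; filter_upwards with x; exact hpt x
      _ = ∏ i : Fin d, ∫ t : ℝ, Real.exp (-(1 / 2) * t ^ 2) := by
          rw [MeasureTheory.integral_fintype_prod_volume_eq_prod (ι := Fin d)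
            (fun _ t => Real.exp (-(1 / 2) * t ^ 2))]
      _ = Real.sqrt (2 * Real.pi) ^ d := by
          rw [Finset.prod_const, Finset.card_univ, Fintype.card_fin]
          congr 1
          have := integral_gaussian (1 / 2 : ℝ)
          simp only [neg_mul] at this ⊢
          rw [this]
          congr 1
          rw [div_div_eq_mul_div, div_one, mul_comm]
  rw [key, hmid]
  have habs : |T.det| = M.det ^ ((1 : ℝ) / 2) := by
    rw [← Real.sqrt_eq_rpow, ← hdet2, ← sq, Real.sqrt_sq_eq_abs]
  have hpow : Real.sqrt (2 * Real.pi) ^ d = (2 * Real.pi) ^ ((d : ℝ) / 2) := by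
    rw [Real.sqrt_eq_rpow, ← Real.rpow_natCast ((2 * Real.pi) ^ ((1 : ℝ) / 2)) d,
      ← Real.rpow_mul (by positivity)]
    congr 1
    ring
  rw [habs, hpow, mul_comm]

lemma integral_gaussDensity {d : ℕ} (μ : Fin d → ℝ) {M : Matrix (Fin d) (Fin d) ℝ}
    (hM : M.PosDef) : ∫ x : Fin d → ℝ, gaussDensity d μ M x = 1 := by
  have h2π : (0 : ℝ) < 2 * Real.pi := by positivity
  unfold gaussDensity
  rw [MeasureTheory.integral_const_mul]
  have ht : (∫ x : Fin d → ℝ, Real.exp (-(1 / 2) * ((x - μ) ⬝ᵥ (M⁻¹ *ᵥ (x - μ))))) =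
      ∫ x : Fin d → ℝ, Real.exp (-(1 / 2) * (x ⬝ᵥ (M⁻¹ *ᵥ x))) :=
    integral_sub_right_eq_self (fun x => Real.exp (-(1 / 2) * (x ⬝ᵥ (M⁻¹ *ᵥ x)))) μ
  rw [ht, gauss_quad_integral hM, mul_mul_mul_comm, ← Real.rpow_add h2π,
    ← Real.rpow_add hM.det_pos]
  rw [show -(d : ℝ) / 2 + (d : ℝ) / 2 = 0 by ring, show -(1 : ℝ) / 2 + 1 / 2 = 0 by ring,
    Real.rpow_zero, Real.rpow_zero, one_mul]


/-- Theorem 1(c), weight-preserving tempering, version #2: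
with `h(x) = w φ(x; μ, Σ)`, one has `h(x)^β h(μ)^{1-β} = (w / β^{d/2}) φ(x; μ, Σ/β)` for every
`x`, and hence `∫ h(x)^β h(μ)^{1-β} dx = w β^{-d/2}`, so the tempered component weights are
proportional to `w`, independently of `β` and of the covariance `Σ`. -/
theorem weight_preserving_tempering_v2 (d : ℕ) (hd : 1 ≤ d) (μ : Fin d → ℝ)
    (S : Matrix (Fin d) (Fin d) ℝ) (hS : S.PosDef) (w β : ℝ) (hw : 0 < w) (hβ : 0 < β)
    (h : (Fin d → ℝ) → ℝ) (hdef : ∀ x, h x = w * gaussDensity d μ S x) :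
    (∀ x, h x ^ β * h μ ^ (1 - β) = w / β ^ ((d : ℝ) / 2) * gaussDensity d μ (β⁻¹ • S) x) ∧
      ∫ x : Fin d → ℝ, h x ^ β * h μ ^ (1 - β) = w * β ^ (-(d : ℝ) / 2) := by
  have h2π : (0 : ℝ) < 2 * Real.pi := by positivity
  have hdS : 0 < S.det := hS.det_pos
  set c : ℝ := (2 * Real.pi) ^ (-(d : ℝ) / 2) * S.det ^ (-(1 : ℝ) / 2) with hc
  have hcpos : 0 < c := by positivity
  have hβd : (0 : ℝ) < β ^ ((d : ℝ) / 2) := Real.rpow_pos_of_pos hβ _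
  -- h μ = w * c
  have hμval : h μ = w * c := by
    rw [hdef μ]
    unfold gaussDensity
    rw [sub_self, mulVec_zero, dotProduct_zero, mul_zero, Real.exp_zero, mul_one]
  -- inverse of the scaled matrix
  have hinv : (β⁻¹ • S)⁻¹ = β • S⁻¹ := by
    apply Matrix.inv_eq_right_inv
    rw [Matrix.smul_mul, Matrix.mul_smul, smul_smul, inv_mul_cancel₀ hβ.ne',
      Matrix.mul_nonsing_inv S (isUnit_iff_ne_zero.mpr hdS.ne'), one_smul]
  have hdet' : (β⁻¹ • S).det = β⁻¹ ^ d * S.det := by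
    rw [Matrix.det_smul, Fintype.card_fin]
  have hpowinv : ((β⁻¹ : ℝ) ^ d) ^ (-(1 : ℝ) / 2) = β ^ ((d : ℝ) / 2) := by
    rw [← Real.rpow_natCast (β⁻¹) d, ← Real.rpow_mul (inv_nonneg.mpr hβ.le),
      Real.inv_rpow hβ.le, ← Real.rpow_neg hβ.le]
    congr 1
    ring
  have hdens : ∀ x, gaussDensity d μ (β⁻¹ • S) x =
      β ^ ((d : ℝ) / 2) * c *
        Real.exp (-(1 / 2) * (β * ((x - μ) ⬝ᵥ (S⁻¹ *ᵥ (x - μ))))) := by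
    intro x
    unfold gaussDensity
    rw [hinv, hdet', smul_mulVec, dotProduct_smul, smul_eq_mul,
      Real.mul_rpow (by positivity) hdS.le, hpowinv, hc]
    ring
  have hpart1 : ∀ x, h x ^ β * h μ ^ (1 - β) =
      w / β ^ ((d : ℝ) / 2) * gaussDensity d μ (β⁻¹ • S) x := by
    intro x
    have hgd : gaussDensity d μ S x =
        c * Real.exp (-(1 / 2) * ((x - μ) ⬝ᵥ (S⁻¹ *ᵥ (x - μ)))) := rfl
    set q : ℝ := (x - μ) ⬝ᵥ (S⁻¹ *ᵥ (x - μ)) with hq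
    rw [hdef x, hμval, hdens x, hgd,
      show w * (c * Real.exp (-(1 / 2) * q)) = w * c * Real.exp (-(1 / 2) * q) from by ring,
      Real.mul_rpow (by positivity) (Real.exp_pos _).le, ← Real.exp_mul]
    calc (w * c) ^ β * Real.exp (-(1 / 2) * q * β) * (w * c) ^ (1 - β)
        = (w * c) ^ β * (w * c) ^ (1 - β) * Real.exp (-(1 / 2) * q * β) := by ring
      _ = (w * c) * Real.exp (-(1 / 2) * q * β) := by
          rw [← Real.rpow_add (by positivity), show β + (1 - β) = 1 from by ring, Real.rpow_one]
      _ = w / β ^ ((d : ℝ) / 2) * (β ^ ((d : ℝ) / 2) * c * Real.exp (-(1 / 2) * (β * q))) := by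
          rw [show -(1 / 2) * q * β = -(1 / 2) * (β * q) from by ring]
          field_simp
  have hS' : (β⁻¹ • S).PosDef := by
    apply Matrix.PosDef.of_dotProduct_mulVec_pos
    · show (β⁻¹ • S)ᴴ = β⁻¹ • S
      rw [Matrix.conjTranspose_smul, star_trivial, hS.1]
    · intro x hx
      rw [smul_mulVec, dotProduct_smul, smul_eq_mul]
      exact mul_pos (inv_pos.mpr hβ) (hS.dotProduct_mulVec_pos hx)
  refine ⟨hpart1, ?_⟩
  calc (∫ x : Fin d → ℝ, h x ^ β * h μ ^ (1 - β))
      = ∫ x : Fin d → ℝ, w / β ^ ((d : ℝ) / 2) * gaussDensity d μ (β⁻¹ • S) x := by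
        apply integral_congr_ae; filter_upwards with x; exact hpart1 x
    _ = w / β ^ ((d : ℝ) / 2) * ∫ x : Fin d → ℝ, gaussDensity d μ (β⁻¹ • S) x :=
        MeasureTheory.integral_const_mul _ _
    _ = w / β ^ ((d : ℝ) / 2) := by rw [integral_gaussDensity μ hS', mul_one]
    _ = w * β ^ (-(d : ℝ) / 2) := by
        rw [div_eq_mul_inv, ← Real.rpow_neg hβ.le, neg_div]
end

section
/- (Dimensional degradation of power-tempered weights, equation (8).) Let d ≥ 1, let μ₁, μ₂ ∈ ℝ^d, let σ > 0, let w > 0 and β ∈ (0, 1]. Then the ratio of the power-tempered component masses of the two Gaussian components with equal weights and covariances σ²·I_d and I_d respectively satisfies ( ∫_{ℝ^d} (w φ(x; μ₂, σ² I_d))^β dx ) / ( ∫_{ℝ^d} (w φ(x; μ₁, I_d))^β dx ) = σ^{d(1-β)}. In particular, for fixed β < 1 and σ > 1, this ratio grows exponentially in the dimension d. -/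
open MeasureTheory Matrix

lemma gaussDensity_smul_one (d : ℕ) (μ : Fin d → ℝ) {s : ℝ} (hs : 0 < s) (x : Fin d → ℝ) :
    gaussDensity d μ (s ^ 2 • (1 : Matrix (Fin d) (Fin d) ℝ)) x
      = (2 * Real.pi) ^ (-(d : ℝ) / 2) * s ^ (-(d : ℝ)) *
        Real.exp (-(1 / (2 * s ^ 2)) * ∑ i, (x i - μ i) ^ 2) := by
  have hinv : (s ^ 2 • (1 : Matrix (Fin d) (Fin d) ℝ))⁻¹
      = (s ^ 2)⁻¹ • (1 : Matrix (Fin d) (Fin d) ℝ) := by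
    apply Matrix.inv_eq_right_inv
    rw [Matrix.smul_mul, Matrix.mul_smul, Matrix.one_mul, smul_smul]
    rw [mul_inv_cancel₀ (by positivity : (s:ℝ) ^ 2 ≠ 0), one_smul]
  have hdet : (s ^ 2 • (1 : Matrix (Fin d) (Fin d) ℝ)).det = (s ^ 2) ^ d := by
    simp [Matrix.det_smul]
  have hdetpow : ((s ^ 2) ^ d : ℝ) ^ (-(1:ℝ)/2) = s ^ (-(d:ℝ)) := by
    rw [← Real.rpow_natCast (s ^ 2) d, ← Real.rpow_natCast s 2,
      ← Real.rpow_mul hs.le, ← Real.rpow_mul hs.le]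
    ring_nf
  have hquad : (x - μ) ⬝ᵥ ((s ^ 2)⁻¹ • (1 : Matrix (Fin d) (Fin d) ℝ)) *ᵥ (x - μ)
      = (s ^ 2)⁻¹ * ∑ i, (x i - μ i) ^ 2 := by
    rw [Matrix.smul_mulVec, Matrix.one_mulVec, dotProduct_smul]
    simp [dotProduct, Pi.sub_apply, sq, smul_eq_mul]
  rw [gaussDensity, hinv, hdet, hdetpow, hquad]
  congr 2
  ring

lemma gauss_integral (d : ℕ) (μ : Fin d → ℝ) (a : ℝ) :
    ∫ x : Fin d → ℝ, Real.exp (-a * ∑ i, (x i - μ i) ^ 2)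
      = (Real.sqrt (Real.pi / a)) ^ d := by
  have h : ∀ x : Fin d → ℝ,
      Real.exp (-a * ∑ i, (x i - μ i) ^ 2) = ∏ i, Real.exp (-a * (x i - μ i) ^ 2) := by
    intro x
    rw [← Real.exp_sum, Finset.mul_sum]
  simp_rw [h]
  rw [integral_fintype_prod_volume_eq_prod (f := fun i (v : ℝ) => Real.exp (-a * (v - μ i) ^ 2))]
  have h2 : ∀ i : Fin d, (∫ v : ℝ, Real.exp (-a * (v - μ i) ^ 2)) = Real.sqrt (Real.pi / a) := by
    intro i
    rw [integral_sub_right_eq_self (μ := volume) (fun v => Real.exp (-a * v ^ 2)) (μ i)]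
    exact integral_gaussian a
  rw [Finset.prod_congr rfl fun i _ => h2 i, Finset.prod_const, Finset.card_univ,
    Fintype.card_fin]

lemma mass_eq (d : ℕ) (μ : Fin d → ℝ) {s w β : ℝ} (hs : 0 < s) (hw : 0 < w) (hβ : 0 < β) :
    (∫ x : Fin d → ℝ, (w * gaussDensity d μ (s ^ 2 • (1 : Matrix (Fin d) (Fin d) ℝ)) x) ^ β)
      = w ^ β * ((2 * Real.pi) ^ (-(d : ℝ) / 2)) ^ β * (s ^ (-(d : ℝ))) ^ β *
        (Real.sqrt (Real.pi / (β / (2 * s ^ 2)))) ^ d := by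
  have hC : (0:ℝ) < (2 * Real.pi) ^ (-(d : ℝ) / 2) := Real.rpow_pos_of_pos (by positivity) _
  have hs' : (0:ℝ) < s ^ (-(d : ℝ)) := Real.rpow_pos_of_pos hs _
  have h : ∀ x : Fin d → ℝ,
      (w * gaussDensity d μ (s ^ 2 • (1 : Matrix (Fin d) (Fin d) ℝ)) x) ^ β
        = w ^ β * ((2 * Real.pi) ^ (-(d : ℝ) / 2)) ^ β * (s ^ (-(d : ℝ))) ^ β *
          Real.exp (-(β / (2 * s ^ 2)) * ∑ i, (x i - μ i) ^ 2) := by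
    intro x
    rw [gaussDensity_smul_one d μ hs x,
      Real.mul_rpow hw.le (by positivity),
      Real.mul_rpow (by positivity) (Real.exp_nonneg _),
      Real.mul_rpow hC.le hs'.le, ← Real.exp_mul]
    rw [show (-(1 / (2 * s ^ 2)) * ∑ i, (x i - μ i) ^ 2) * β
        = -(β / (2 * s ^ 2)) * ∑ i, (x i - μ i) ^ 2 from by ring, ← mul_assoc, ← mul_assoc]
  simp_rw [h]
  rw [MeasureTheory.integral_const_mul, gauss_integral d μ (β / (2 * s ^ 2))]

/-- dimensional degradation of power-tempered weights, equation (8):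
the ratio of the power-tempered masses of two equally weighted Gaussian components with
covariances `σ² I_d` and `I_d` equals `σ^{d(1-β)}`, which for fixed `β < 1` and `σ > 1`
grows exponentially in the dimension `d`. -/
theorem power_tempered_weight_ratio (d : ℕ) (hd : 1 ≤ d) (μ₁ μ₂ : Fin d → ℝ)
    (σ w : ℝ) (hσ : 0 < σ) (hw : 0 < w) (β : ℝ) (hβ0 : 0 < β) (hβ1 : β ≤ 1) :
    (∫ x : Fin d → ℝ,
        (w * gaussDensity d μ₂ (σ ^ 2 • (1 : Matrix (Fin d) (Fin d) ℝ)) x) ^ β) /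
      (∫ x : Fin d → ℝ, (w * gaussDensity d μ₁ (1 : Matrix (Fin d) (Fin d) ℝ) x) ^ β) =
      σ ^ ((d : ℝ) * (1 - β)) := by
  have hnum := mass_eq d μ₂ hσ hw hβ0
  have hden := mass_eq d μ₁ one_pos hw hβ0
  rw [one_pow, one_smul] at hden
  have h1 : ((1:ℝ) ^ (-(d:ℝ))) ^ β = 1 := by rw [Real.one_rpow, Real.one_rpow]
  rw [h1] at hden
  have hsqrt : Real.sqrt (Real.pi / (β / (2 * σ ^ 2)))
      = σ * Real.sqrt (Real.pi / (β / (2 * (1:ℝ)))) := by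
    rw [show Real.pi / (β / (2 * σ ^ 2)) = σ ^ 2 * (Real.pi / (β / (2 * (1:ℝ)))) from by
        field_simp,
      Real.sqrt_mul (sq_nonneg σ), Real.sqrt_sq hσ.le]
  have e1 : (σ ^ (-(d:ℝ))) ^ β = σ ^ (-((d:ℝ) * β)) := by
    rw [← Real.rpow_mul hσ.le, neg_mul]
  have e2 : σ ^ ((d:ℝ) * (1 - β)) = σ ^ (-((d:ℝ) * β)) * σ ^ d := by
    rw [← Real.rpow_natCast σ d, ← Real.rpow_add hσ]
    congr 1
    ring
  have hpos : (0:ℝ) < w ^ β * ((2 * Real.pi) ^ (-(d:ℝ)/2)) ^ β * 1 *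
      (Real.sqrt (Real.pi / (β / (2 * (1:ℝ))))) ^ d := by
    have : (0:ℝ) < Real.pi / (β / (2 * (1:ℝ))) := by positivity
    have := Real.sqrt_pos.mpr this
    positivity
  rw [hnum, hden, hsqrt, mul_pow, e1, div_eq_iff (ne_of_gt hpos), e2]
  ring
end

section
/- (Well-definedness of the Hessian Adjusted Tempering target.) Let d ≥ 1 and let π : ℝ^d → (0, ∞) be continuous and bounded with ∫_{ℝ^d} π(x)^β dx < ∞ for all β ∈ (0, ∞). Let μ₁, …, μ_K ∈ ℝ^d be mode points, let Σ₁, …, Σ_K be positive definite real d×d matrices, and let ŵ₁, …, ŵ_K > 0. Let A : ℝ^d × (0, ∞) → {1, …, K} be a measurable function such that for every x and β, A(x, β) attains the maximum over j of ŵ_j · φ(x; μ_j, Σ_j/β). Fix β ∈ (0, ∞) and define the HAT target π_β^H(x) = π(x)^β · π(μ_{A(x,β)})^{1-β} if A(x, β) = A(x, 1), and π_β^H(x) = G(x, β) otherwise, where G(x, β) = π(μ_Â) · ((2π)^d det Σ_Â)^{1/2} · φ(x; μ_Â, Σ_Â/β) / β^{d/2} with Â = A(x, β). Then 0 < ∫_{ℝ^d}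 π_β^H(x) dx < ∞, so that π_β^H can be normalized to a probability density. -/
open MeasureTheory Matrix

lemma posDef_smul {d : ℕ} {M : Matrix (Fin d) (Fin d) ℝ} (hM : M.PosDef)
    {c : ℝ} (hc : 0 < c) : (c • M).PosDef := by
  refine posDef_iff_dotProduct_mulVec.mpr ⟨?_, fun x hx => ?_⟩
  · show (c • M)ᴴ = c • M
    rw [conjTranspose_smul, hM.1]
    simp
  · have : x ⬝ᵥ (c • M) *ᵥ x = c * (x ⬝ᵥ M *ᵥ x) := by
      rw [smul_mulVec, dotProduct_smul, smul_eq_mul]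
    simpa [this] using mul_pos hc (hM.dotProduct_mulVec_pos hx)

lemma quad_continuous {d : ℕ} (M : Matrix (Fin d) (Fin d) ℝ) :
    Continuous fun v : Fin d → ℝ => v ⬝ᵥ M *ᵥ v := by
  have : (fun v : Fin d → ℝ => v ⬝ᵥ M *ᵥ v)
      = fun v => ∑ i, v i * ∑ j, M i j * v j := by
    funext v; simp [dotProduct, mulVec]
  rw [this]
  exact continuous_finset_sum _ fun i _ => (continuous_apply i).mul
    (continuous_finset_sum _ fun j _ => continuous_const.mul (continuous_apply j))

lemma quad_lower_bound {d : ℕ} {M : Matrix (Fin d) (Fin d) ℝ} (hM : M.PosDef) :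
    ∃ c : ℝ, 0 < c ∧ ∀ v : Fin d → ℝ, c * (∑ i, v i ^ 2) ≤ v ⬝ᵥ M *ᵥ v := by
  rcases Nat.eq_zero_or_pos d with hd | hd
  · subst hd
    exact ⟨1, one_pos, fun v => by simp [Subsingleton.elim v 0]⟩
  · have hne : Nonempty (Fin d) := ⟨⟨0, hd⟩⟩
    set f : (Fin d → ℝ) → ℝ := fun v => v ⬝ᵥ M *ᵥ v with hf
    have hfc : Continuous f := quad_continuous M
    have hsne : (Metric.sphere (0 : Fin d → ℝ) 1).Nonempty := by
      refine ⟨fun _ => 1, ?_⟩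
      simp [Metric.mem_sphere]
    obtain ⟨u, hu, hmin⟩ := (isCompact_sphere (0 : Fin d → ℝ) 1).exists_isMinOn hsne
      hfc.continuousOn
    have hune : u ≠ 0 := by
      intro h
      rw [h] at hu
      simp at hu
    have hfu : 0 < f u := by simpa [hf] using hM.dotProduct_mulVec_pos hune
    have hscale : ∀ (s : ℝ) (w : Fin d → ℝ), f (s • w) = s ^ 2 * f w := by
      intro s w
      simp only [hf, smul_dotProduct, mulVec_smul, dotProduct_smul, smul_eq_mul]
      ring
    refine ⟨f u / d, div_pos hfu (by exact_mod_cast hd), fun v => ?_⟩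
    rcases eq_or_ne v 0 with rfl | hv
    · simp [hf]
    · have hnv : 0 < ‖v‖ := norm_pos_iff.mpr hv
      have hmem : ‖v‖⁻¹ • v ∈ Metric.sphere (0 : Fin d → ℝ) 1 := by
        simp [norm_smul, abs_of_pos (inv_pos.mpr hnv), inv_mul_cancel₀ hnv.ne']
      have h1 : f u ≤ f (‖v‖⁻¹ • v) := hmin hmem
      have h2 : f (‖v‖⁻¹ • v) = (‖v‖⁻¹) ^ 2 * f v := hscale _ _
      have h3 : f u * ‖v‖ ^ 2 ≤ f v := by
        rw [h2] at h1
        have := mul_le_mul_of_nonneg_right h1 (sq_nonneg ‖v‖)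
        calc f u * ‖v‖ ^ 2 ≤ (‖v‖⁻¹) ^ 2 * f v * ‖v‖ ^ 2 := this
          _ = f v := by field_simp
      have h4 : (∑ i, v i ^ 2) ≤ d * ‖v‖ ^ 2 := by
        calc (∑ i, v i ^ 2) ≤ ∑ _i : Fin d, ‖v‖ ^ 2 :=
              Finset.sum_le_sum fun i _ => by
                have := norm_le_pi_norm v i
                have h0 : |v i| ≤ ‖v‖ := this
                nlinarith [abs_nonneg (v i), sq_abs (v i)]
          _ = d * ‖v‖ ^ 2 := by simp [Finset.sum_const, nsmul_eq_mul]
      have hd' : (0:ℝ) < d := by exact_mod_cast hd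
      calc f u / d * (∑ i, v i ^ 2) ≤ f u / d * (d * ‖v‖ ^ 2) := by
            apply mul_le_mul_of_nonneg_left h4 (le_of_lt (div_pos hfu hd'))
        _ = f u * ‖v‖ ^ 2 := by field_simp
        _ ≤ f v := h3

lemma gaussDensity_continuous {d : ℕ} (μ : Fin d → ℝ) (S : Matrix (Fin d) (Fin d) ℝ) :
    Continuous (gaussDensity d μ S) := by
  unfold gaussDensity
  exact continuous_const.mul (Real.continuous_exp.comp (continuous_const.mul
    ((quad_continuous S⁻¹).comp (continuous_id.sub continuous_const))))

lemma gaussDensity_pos {d : ℕ} (μ : Fin d → ℝ) {S : Matrix (Fin d) (Fin d) ℝ}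
    (hS : S.PosDef) (x : Fin d → ℝ) : 0 < gaussDensity d μ S x := by
  unfold gaussDensity
  have h1 : (0:ℝ) < 2 * Real.pi := by positivity
  have h2 : 0 < S.det := hS.det_pos
  positivity

lemma gaussDensity_integrable {d : ℕ} (μ : Fin d → ℝ) {S : Matrix (Fin d) (Fin d) ℝ}
    (hS : S.PosDef) : Integrable (gaussDensity d μ S) := by
  obtain ⟨c, hc, hq⟩ := quad_lower_bound hS.inv
  -- dominating integrable function
  have hdom : Integrable (fun x : Fin d → ℝ => Real.exp (-(c / 4) * ∑ i, x i ^ 2)) := by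
    have hb : (0:ℝ) < (((c:ℂ)/4).re) := by simp; positivity
    have h := (GaussianFourier.integrable_cexp_neg_mul_sum_add (b := (c/4 : ℂ)) (ι := Fin d) hb
      (fun _ => 0)).norm
    have heq : (fun v : Fin d → ℝ =>
        ‖Complex.exp (-((c:ℂ)/4) * ∑ i, (v i : ℂ) ^ 2 + ∑ i : Fin d, 0 * (v i : ℂ))‖)
        = fun v : Fin d → ℝ => Real.exp (-(c / 4) * ∑ i, v i ^ 2) := by
      funext v
      have hz : -((c:ℂ)/4) * ∑ i, (v i : ℂ) ^ 2 + ∑ i : Fin d, 0 * (v i : ℂ)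
          = ((-(c/4) * ∑ i, v i ^ 2 : ℝ) : ℂ) := by simp only [zero_mul, Finset.sum_const_zero, add_zero]; push_cast; ring
      rw [hz, Complex.norm_exp, Complex.ofReal_re]
    rwa [heq] at h
  set K0 : ℝ := (2 * Real.pi) ^ (-(d : ℝ) / 2) * S.det ^ (-(1 : ℝ) / 2) with hK0
  have hK0pos : 0 < K0 := by
    have h1 : (0:ℝ) < 2 * Real.pi := by positivity
    have h2 : 0 < S.det := hS.det_pos
    positivity
  set D : ℝ := K0 * Real.exp (c / 2 * ∑ i, μ i ^ 2) with hD
  refine ((hdom.const_mul D).mono' ((gaussDensity_continuous μ S).aestronglyMeasurable)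
    (Filter.Eventually.of_forall fun x => ?_))
  have hgpos : 0 < gaussDensity d μ S x := gaussDensity_pos μ hS x
  rw [Real.norm_of_nonneg hgpos.le]
  unfold gaussDensity
  have hq1 : c * ∑ i, (x i - μ i) ^ 2 ≤ (x - μ) ⬝ᵥ S⁻¹ *ᵥ (x - μ) := by
    have := hq (x - μ)
    simpa using this
  have hq2 : (1/2) * (∑ i, x i ^ 2) - ∑ i, μ i ^ 2 ≤ ∑ i, (x i - μ i) ^ 2 := by
    have : ∑ i, ((1/2) * x i ^ 2 - μ i ^ 2) ≤ ∑ i, (x i - μ i) ^ 2 :=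
      Finset.sum_le_sum fun i _ => by nlinarith [sq_nonneg (x i - 2 * μ i)]
    calc (1/2) * (∑ i, x i ^ 2) - ∑ i, μ i ^ 2
        = ∑ i, ((1/2) * x i ^ 2 - μ i ^ 2) := by
          rw [Finset.sum_sub_distrib, Finset.mul_sum]
      _ ≤ _ := this
  have hexp : -(1/2) * ((x - μ) ⬝ᵥ S⁻¹ *ᵥ (x - μ))
      ≤ c / 2 * ∑ i, μ i ^ 2 + (-(c / 4) * ∑ i, x i ^ 2) := by
    nlinarith [hq1, hq2, hc]
  calc K0 * Real.exp (-(1/2) * ((x - μ) ⬝ᵥ S⁻¹ *ᵥ (x - μ)))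
      ≤ K0 * Real.exp (c / 2 * ∑ i, μ i ^ 2 + (-(c / 4) * ∑ i, x i ^ 2)) := by
        exact mul_le_mul_of_nonneg_left (Real.exp_le_exp.mpr hexp) hK0pos.le
    _ = D * Real.exp (-(c / 4) * ∑ i, x i ^ 2) := by
        rw [hD, Real.exp_add]; ring

/-- well-definedness of the Hessian Adjusted Tempering target:
for a continuous, bounded, positive target `π` with `∫ π^β < ∞` for all `β > 0`, mode points
`μ_j`, positive definite `Σ_j`, weights `wh_j > 0`, and a measurable mode assignment function
`A` with `A(x,β)` maximising `j ↦ wh_j φ(x; μ_j, Σ_j/β)`, the HAT target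
`π_β^H(x) = π(x)^β π(μ_{A(x,β)})^{1-β}` if `A(x,β) = A(x,1)` and `G(x,β)` otherwise
satisfies `0 < ∫ π_β^H < ∞`, so it can be normalised to a probability density. -/
theorem HAT_target_well_defined (d K : ℕ) (hd : 1 ≤ d) (hK : 1 ≤ K)
    (pr : (Fin d → ℝ) → ℝ) (hπpos : ∀ x, 0 < pr x) (hπcont : Continuous pr)
    (hπbdd : ∃ Cb : ℝ, ∀ x, pr x ≤ Cb)
    (hπint : ∀ β : ℝ, 0 < β → Integrable (fun x : Fin d → ℝ => pr x ^ β))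
    (μs : Fin K → Fin d → ℝ) (Ss : Fin K → Matrix (Fin d) (Fin d) ℝ)
    (hSs : ∀ j, (Ss j).PosDef) (wh : Fin K → ℝ) (hwh : ∀ j, 0 < wh j)
    (A : (Fin d → ℝ) → ℝ → Fin K)
    (hAmeas : Measurable (Function.uncurry A))
    (hAmax : ∀ x : Fin d → ℝ, ∀ β : ℝ, 0 < β → ∀ j,
      wh j * gaussDensity d (μs j) (β⁻¹ • Ss j) x ≤
        wh (A x β) * gaussDensity d (μs (A x β)) (β⁻¹ • Ss (A x β)) x)
    (β : ℝ) (hβ : 0 < β)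
    (prH : (Fin d → ℝ) → ℝ)
    (hprH : ∀ x, prH x =
      if A x β = A x 1 then pr x ^ β * pr (μs (A x β)) ^ (1 - β)
      else pr (μs (A x β)) * ((2 * Real.pi) ^ (d : ℝ) * (Ss (A x β)).det) ^ ((1 : ℝ) / 2) *
        gaussDensity d (μs (A x β)) (β⁻¹ • Ss (A x β)) x / β ^ ((d : ℝ) / 2)) :
    Integrable prH ∧ 0 < ∫ x : Fin d → ℝ, prH x := by
  classical
  have hSβ : ∀ j, (β⁻¹ • Ss j).PosDef := fun j => posDef_smul (hSs j) (inv_pos.mpr hβ)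
  -- measurable assignment maps
  have hAβ : Measurable fun x : Fin d → ℝ => A x β :=
    hAmeas.comp (measurable_id.prodMk measurable_const)
  have hA1 : Measurable fun x : Fin d → ℝ => A x 1 :=
    hAmeas.comp (measurable_id.prodMk measurable_const)
  -- the branch functions
  set F : Fin K → (Fin d → ℝ) → ℝ := fun j x =>
    if j = A x 1 then pr x ^ β * pr (μs j) ^ (1 - β)
    else pr (μs j) * ((2 * Real.pi) ^ (d : ℝ) * (Ss j).det) ^ ((1 : ℝ) / 2) *
      gaussDensity d (μs j) (β⁻¹ • Ss j) x / β ^ ((d : ℝ) / 2) with hF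
  have hprH' : ∀ x, prH x = F (A x β) x := fun x => by rw [hprH x]
  have hFmeas : ∀ j, Measurable (F j) := by
    intro j
    have hs : MeasurableSet {x : Fin d → ℝ | j = A x 1} := by
      have : {x : Fin d → ℝ | j = A x 1} = (fun x => A x 1) ⁻¹' {j} := by
        ext x; simp [eq_comm]
      rw [this]; exact hA1 (measurableSet_singleton j)
    refine Measurable.ite hs ?_ ?_
    · exact ((hπcont.rpow_const fun x => Or.inl (hπpos x).ne').mul
        continuous_const).measurable
    · exact ((continuous_const.mul (gaussDensity_continuous (μs j) (β⁻¹ • Ss j))).div_const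
        _).measurable
  have hmeas : Measurable prH := by
    have heq : prH = fun x => ∑ j : Fin K, if A x β = j then F j x else 0 := by
      funext x
      rw [hprH' x, Finset.sum_ite_eq]
      simp
    rw [heq]
    refine Finset.measurable_sum _ fun j _ => ?_
    have hs : MeasurableSet {x : Fin d → ℝ | A x β = j} := by
      have : {x : Fin d → ℝ | A x β = j} = (fun x => A x β) ⁻¹' {j} := by ext x; simp
      rw [this]; exact hAβ (measurableSet_singleton j)
    exact Measurable.ite hs (hFmeas j) measurable_const
  -- pointwise positivity
  have hpos : ∀ x, 0 < prH x := by
    intro x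
    rw [hprH' x]
    simp only [hF]
    split
    · exact mul_pos (Real.rpow_pos_of_pos (hπpos x) _) (Real.rpow_pos_of_pos (hπpos _) _)
    · apply div_pos
      · refine mul_pos (mul_pos (hπpos _) (Real.rpow_pos_of_pos ?_ _)) ?_
        · exact mul_pos (Real.rpow_pos_of_pos (by positivity) _) (hSs _).det_pos
        · exact gaussDensity_pos _ (hSβ _) x
      · exact Real.rpow_pos_of_pos hβ _
  -- the dominating function
  set G : Fin K → (Fin d → ℝ) → ℝ := fun j x =>
    pr (μs j) * ((2 * Real.pi) ^ (d : ℝ) * (Ss j).det) ^ ((1 : ℝ) / 2) *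
      gaussDensity d (μs j) (β⁻¹ • Ss j) x / β ^ ((d : ℝ) / 2) with hG
  have hGpos : ∀ j x, 0 < G j x := by
    intro j x
    apply div_pos
    · refine mul_pos (mul_pos (hπpos _) (Real.rpow_pos_of_pos ?_ _)) (gaussDensity_pos _ (hSβ _) x)
      exact mul_pos (Real.rpow_pos_of_pos (by positivity) _) (hSs _).det_pos
    · exact Real.rpow_pos_of_pos hβ _
  set g : (Fin d → ℝ) → ℝ := fun x =>
    (∑ j : Fin K, pr (μs j) ^ (1 - β)) * pr x ^ β + ∑ j : Fin K, G j x with hg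
  have hgint : Integrable g := by
    refine Integrable.add ((hπint β hβ).const_mul _) ?_
    refine integrable_finset_sum _ fun j _ => ?_
    exact ((gaussDensity_integrable (μs j) (hSβ j)).const_mul _).div_const _
  have hbound : ∀ x, ‖prH x‖ ≤ g x := by
    intro x
    rw [Real.norm_of_nonneg (hpos x).le, hprH' x]
    simp only [hF]
    split
    · have h1 : pr (μs (A x β)) ^ (1 - β) ≤ ∑ j : Fin K, pr (μs j) ^ (1 - β) :=
        Finset.single_le_sum (f := fun j => pr (μs j) ^ (1 - β))
          (fun j _ => (Real.rpow_pos_of_pos (hπpos _) _).le) (Finset.mem_univ _)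
      have h2 : pr x ^ β * pr (μs (A x β)) ^ (1 - β)
          ≤ (∑ j : Fin K, pr (μs j) ^ (1 - β)) * pr x ^ β := by
        rw [mul_comm]
        exact mul_le_mul_of_nonneg_right h1 (Real.rpow_pos_of_pos (hπpos x) _).le
      refine h2.trans ?_
      have h3 : 0 ≤ ∑ j : Fin K, G j x :=
        Finset.sum_nonneg fun j _ => (hGpos j x).le
      rw [hg]
      dsimp only
      linarith
    · have h1 : G (A x β) x ≤ ∑ j : Fin K, G j x :=
        Finset.single_le_sum (f := fun j => G j x) (fun j _ => (hGpos j x).le)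
          (Finset.mem_univ _)
      have h2 : 0 ≤ (∑ j : Fin K, pr (μs j) ^ (1 - β)) * pr x ^ β := by
        have := Real.rpow_pos_of_pos (hπpos x) β
        have h3 : 0 ≤ ∑ j : Fin K, pr (μs j) ^ (1 - β) :=
          Finset.sum_nonneg fun j _ => (Real.rpow_pos_of_pos (hπpos _) _).le
        positivity
      show G (A x β) x ≤ g x
      rw [hg]
      dsimp only
      linarith
  have hint : Integrable prH :=
    hgint.mono' hmeas.aestronglyMeasurable (Filter.Eventually.of_forall hbound)
  refine ⟨hint, ?_⟩
  rw [integral_pos_iff_support_of_nonneg (fun x => (hpos x).le) hint]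
  have hsupp : Function.support prH = Set.univ :=
    Set.eq_univ_of_forall fun x => (hpos x).ne'
  rw [hsupp]
  exact isOpen_univ.measure_pos volume ⟨0, trivial⟩
end

section
/- (Exponential Power Family variance formula used in the proportionality condition.) Let λ > 0, r > 0 and β > 0, and let f(x) ∝ e^{-λ |x|^r} be the exponential power density on ℝ, so that the tempered density at inverse temperature β is f_β(x) = e^{-βλ|x|^r} / ∫_ℝ e^{-βλ|y|^r} dy. Then the variance of log f under f_β satisfies Var_{X ∼ f_β}( -λ |X|^r ) = 1/(r β²); that is, I(β) = Var_{x ∼ f^β}(log f(x)) = 1/(r β²). -/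
open MeasureTheory Real Set

lemma aux_integrableOn {p s b : ℝ} (hp : 0 < p) (hs : -1 < s) (hb : 0 < b) :
    IntegrableOn (fun x : ℝ => x ^ s * Real.exp (-(b * x ^ p))) (Ioi 0) := by
  set q : ℝ := (s + 1) / p - 1 with hq_def
  have hq1 : 0 < q + 1 := by
    rw [hq_def]; have : 0 < (s+1)/p := div_pos (by linarith) hp; linarith
  have hg : IntegrableOn (fun y : ℝ => Real.exp (-y) * y ^ q) (Ioi 0) := by
    have := Real.GammaIntegral_convergent hq1
    simpa using this
  have hgb : IntegrableOn (fun y : ℝ => Real.exp (-(b*y)) * (b*y) ^ q) (Ioi 0) := by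
    have h := (integrableOn_Ioi_comp_mul_left_iff
      (fun y : ℝ => Real.exp (-y) * y ^ q) 0 hb).mpr
    rw [mul_zero] at h
    exact h hg
  have hf : IntegrableOn (fun y : ℝ => y ^ q * Real.exp (-(b*y))) (Ioi 0) := by
    have h : IntegrableOn (fun y : ℝ => b ^ (-q) * (Real.exp (-(b*y)) * (b*y) ^ q)) (Ioi 0) :=
      hgb.const_mul (b ^ (-q))
    refine h.congr_fun (fun y hy => ?_) measurableSet_Ioi
    have hy0 : (0:ℝ) < y := hy
    dsimp only
    rw [Real.mul_rpow hb.le hy0.le, Real.rpow_neg hb.le]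
    have hbq : b ^ q ≠ 0 := (Real.rpow_pos_of_pos hb q).ne'
    field_simp
  have h := (integrableOn_Ioi_comp_rpow_iff'
    (fun y : ℝ => y ^ q * Real.exp (-(b*y))) hp.ne').mpr hf
  refine h.congr_fun (fun x hx => ?_) measurableSet_Ioi
  have hx0 : (0:ℝ) < x := hx
  have hpq : p - 1 + p * q = s := by rw [hq_def]; field_simp; ring
  dsimp only
  rw [smul_eq_mul, ← Real.rpow_mul hx0.le, ← mul_assoc, ← Real.rpow_add hx0, hpq]

lemma integrable_comp_abs' {f : ℝ → ℝ} (hf : IntegrableOn f (Ioi 0)) :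
    Integrable (fun x : ℝ => f |x|) := by
  have hIoi : IntegrableOn (fun x : ℝ => f |x|) (Ioi 0) :=
    hf.congr_fun (fun x hx => by rw [abs_of_pos (by exact hx)]) measurableSet_Ioi
  have int_Iic : IntegrableOn (fun x ↦ f |x|) (Iic 0) := by
    rw [← Measure.map_neg_eq_self (volume : Measure ℝ)]
    have m : MeasurableEmbedding fun x : ℝ => -x := (Homeomorph.neg ℝ).measurableEmbedding
    rw [m.integrableOn_map_iff]
    simp_rw [Function.comp_def, abs_neg, neg_preimage, neg_Iic, neg_zero]
    exact Iff.mpr integrableOn_Ici_iff_integrableOn_Ioi hIoi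
  have h := int_Iic.union hIoi
  rwa [Iic_union_Ioi, integrableOn_univ] at h

lemma aux_integral {p s b : ℝ} (hp : 0 < p) (hs : -1 < s) (hb : 0 < b) :
    ∫ x : ℝ, |x| ^ s * Real.exp (-(b * |x| ^ p))
      = 2 * (b ^ (-(s+1)/p) * (1/p) * Real.Gamma ((s+1)/p)) := by
  rw [integral_comp_abs (f := fun t : ℝ => t ^ s * Real.exp (-(b * t ^ p)))]
  simp_rw [← neg_mul]
  rw [integral_rpow_mul_exp_neg_mul_rpow hp hs hb]

/-- Exponential Power Family variance formula: for the exponential power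
density `f(x) ∝ e^{-λ|x|^r}` on `ℝ`, tempered at inverse temperature `β > 0` to
`f_β(x) = e^{-βλ|x|^r} / ∫ e^{-βλ|y|^r} dy`, the variance of `log f(X) = -λ|X|^r` (up to an
additive constant) under `X ∼ f_β` equals `1/(r β²)`; that is,
`I(β) = Var_{x∼f^β}(log f(x)) = 1/(r β²)`. -/
theorem exponential_power_family_variance (lam r β : ℝ)
    (hlam : 0 < lam) (hr : 0 < r) (hβ : 0 < β) :
    (∫ x : ℝ,
        (-(lam * |x| ^ r) -
            ∫ y : ℝ, (-(lam * |y| ^ r)) *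
              (Real.exp (-(β * lam * |y| ^ r)) /
                ∫ z : ℝ, Real.exp (-(β * lam * |z| ^ r)))) ^ 2 *
          (Real.exp (-(β * lam * |x| ^ r)) /
            ∫ z : ℝ, Real.exp (-(β * lam * |z| ^ r)))) =
      1 / (r * β ^ 2) := by
  have hb : 0 < β * lam := mul_pos hβ hlam
  have hr' : r ≠ 0 := hr.ne'
  set c : ℝ := Real.Gamma (1/r) with hc_def
  have hcpos : 0 < c := Real.Gamma_pos_of_pos (by positivity)
  set A : ℝ := (β*lam) ^ (-(1:ℝ)/r) with hA_def
  have hApos : 0 < A := Real.rpow_pos_of_pos hb _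
  set Z : ℝ := ∫ z : ℝ, Real.exp (-(β * lam * |z| ^ r)) with hZ_def
  -- values of the moment integrals
  have hZ : Z = 2 * (A * (1/r) * c) := by
    rw [hZ_def]
    have h := aux_integral (s := (0:ℝ)) hr (by norm_num) hb
    simp only [Real.rpow_zero, one_mul, zero_add] at h
    rw [h, hA_def, hc_def]
    all_goals norm_num
  have hG1 : (∫ x : ℝ, |x| ^ r * Real.exp (-(β * lam * |x| ^ r)))
      = 2 * (A * (β*lam)⁻¹ * (1/r) * ((1/r) * c)) := by
    have h := aux_integral (s := r) hr (by linarith) hb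
    rw [h]
    have e1 : -(r+1)/r = -(1:ℝ)/r + (-1) := by field_simp <;> ring
    have e2 : (r+1)/r = 1/r + 1 := by field_simp <;> ring
    rw [e1, e2, Real.rpow_add hb, Real.rpow_neg_one,
      Real.Gamma_add_one (by positivity : (1:ℝ)/r ≠ 0)]
    all_goals rw [hA_def, hc_def]
    all_goals ring
  have hG2 : (∫ x : ℝ, |x| ^ (2*r) * Real.exp (-(β * lam * |x| ^ r)))
      = 2 * (A * (β*lam)⁻¹ * (β*lam)⁻¹ * (1/r) * ((1/r + 1) * ((1/r) * c))) := by
    have h := aux_integral (s := 2*r) hr (by linarith) hb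
    rw [h]
    have e1 : -(2*r+1)/r = -(1:ℝ)/r + (-1) + (-1) := by field_simp <;> ring
    have e2 : (2*r+1)/r = (1/r + 1) + 1 := by field_simp <;> ring
    rw [e1, e2, Real.rpow_add hb, Real.rpow_add hb, Real.rpow_neg_one,
      Real.Gamma_add_one (by positivity : (1:ℝ)/r + 1 ≠ 0),
      Real.Gamma_add_one (by positivity : (1:ℝ)/r ≠ 0)]
    all_goals rw [hA_def, hc_def]
    all_goals ring
  -- integrability
  have hi0 : Integrable (fun x : ℝ => Real.exp (-(β * lam * |x| ^ r))) := by
    have h := integrable_comp_abs' (aux_integrableOn (s := (0:ℝ)) hr (by norm_num) hb)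
    refine h.congr (Filter.Eventually.of_forall fun x => ?_)
    simp [Real.rpow_zero]
  have hi1 : Integrable (fun x : ℝ => |x| ^ r * Real.exp (-(β * lam * |x| ^ r))) :=
    integrable_comp_abs' (aux_integrableOn (s := r) hr (by linarith) hb)
  have hi2 : Integrable (fun x : ℝ => |x| ^ (2*r) * Real.exp (-(β * lam * |x| ^ r))) :=
    integrable_comp_abs' (aux_integrableOn (s := 2*r) hr (by linarith) hb)
  have hZ0 : Z ≠ 0 := by rw [hZ]; positivity
  -- the mean
  have hμ : (∫ y : ℝ, (-(lam * |y| ^ r)) *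
      (Real.exp (-(β * lam * |y| ^ r)) / Z)) = -(1/(r*β)) := by
    have h : (fun y : ℝ => (-(lam * |y| ^ r)) *
        (Real.exp (-(β * lam * |y| ^ r)) / Z))
        = fun y : ℝ => (-lam/Z) * (|y| ^ r * Real.exp (-(β * lam * |y| ^ r))) := by
      funext y; ring
    rw [h, integral_const_mul, hG1, hZ]
    field_simp
  rw [hμ]
  have hfun : (fun x : ℝ => (-(lam * |x| ^ r) - -(1/(r*β))) ^ 2 *
        (Real.exp (-(β * lam * |x| ^ r)) / Z))
      = fun x : ℝ => (lam^2/Z) * (|x| ^ (2*r) * Real.exp (-(β * lam * |x| ^ r)))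
        + ((-2*lam/(r*β))/Z * (|x| ^ r * Real.exp (-(β * lam * |x| ^ r)))
          + ((1/(r*β))^2/Z) * Real.exp (-(β * lam * |x| ^ r))) := by
    funext x
    have h2 : |x| ^ (2*r) = (|x| ^ r) ^ 2 := by
      rw [show (2:ℝ)*r = r*2 by ring, Real.rpow_mul (abs_nonneg x),
        show ((2:ℝ) = ((2:ℕ):ℝ)) by norm_num, Real.rpow_natCast]
    rw [h2]; ring
  have e2i : Integrable (fun x : ℝ =>
      lam^2/Z * (|x| ^ (2*r) * Real.exp (-(β * lam * |x| ^ r)))) := hi2.const_mul _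
  have e1i : Integrable (fun x : ℝ =>
      (-2*lam/(r*β))/Z * (|x| ^ r * Real.exp (-(β * lam * |x| ^ r)))) := hi1.const_mul _
  have e0i : Integrable (fun x : ℝ =>
      ((1/(r*β))^2/Z) * Real.exp (-(β * lam * |x| ^ r))) := hi0.const_mul _
  have e10i : Integrable (fun x : ℝ =>
      (-2*lam/(r*β))/Z * (|x| ^ r * Real.exp (-(β * lam * |x| ^ r)))
        + ((1/(r*β))^2/Z) * Real.exp (-(β * lam * |x| ^ r))) := e1i.add e0i
  rw [hfun, integral_add e2i e10i, integral_add e1i e0i,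
    integral_const_mul, integral_const_mul, integral_const_mul,
    hG1, hG2, ← hZ_def, hZ]
  have hbne : β * lam ≠ 0 := hb.ne'
  field_simp
  ring
end
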